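/- Let G be a locally compact Hausdorff group and Γ ≤ G a discrete cocompact subgroup (a cocompact lattice), i.e., Γ is discrete in G and there is a compact set K ⊆ G with ΓK = G. Then Γ is skew-well-placed in G: there exists a Γ-left-equivariant map φ : G → P(Γ) = {p ∈ ℓ¹(Γ) : p ≥ 0, ‖p‖₁ = 1} (i.e., φ(hx) = h·φ(x) for all h ∈ Γ, x ∈ G, where (h·p)(h') = p(h⁻¹h')) which is uniformly continuous from the left uniformity of G to the ‖·‖₁-uniformity on P(Γ); since Γ is discrete, the ‖·‖₁-uniformity on P(Γ) coincides with the UEB uniformity on Mean_u(Γ_ℓ) = P(Γ). -/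

import Mathlib

open Filter Topology MeasureTheory UniformConvergence

/-- `Δ(G)`: finitely supported probability densities on `G`. -/
def IsDelta {G : Type*} (μ : G → ℝ) : Prop :=
  (Function.support μ).Finite ∧ (∀ x, 0 ≤ μ x) ∧ ∑ᶠ x, μ x = 1

/-- The pairing `⟨μ, f⟩ = ∑ₓ μ(x) · f(x)`. -/
noncomputable def dpair {G : Type*} (μ f : G → ℝ) : ℝ := ∑ᶠ x, μ x * f x

/-- Left-translation action on densities: `(g · μ)(x) = μ(g⁻¹x)`. -/
def actD {G : Type*} [Group G] (g : G) (μ : G → ℝ) : G → ℝ := fun x => μ (g⁻¹ * x)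

/-- Action on functionals: `(g · ξ)(f) = ξ(f ∘ λ_g)`. -/
def actF {G : Type*} [Group G] (g : G) (ξ : (G → ℝ) → ℝ) : (G → ℝ) → ℝ :=
  fun f => ξ fun x => f (g * x)

/-- The functional `f ↦ ⟨μ, f⟩` associated with a density `μ`. -/
noncomputable def toFunc {G : Type*} (μ : G → ℝ) : (G → ℝ) → ℝ := fun f => dpair μ f

/-- Bounded right-uniformly continuous functions. -/
def IsRUCB {G : Type*} [Group G] [TopologicalSpace G] (f : G → ℝ) : Prop :=
  (∃ C : ℝ, ∀ x, |f x| ≤ C) ∧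
  ∀ ε > (0 : ℝ), ∃ U ∈ nhds (1 : G), ∀ u ∈ U, ∀ x : G, |f x - f (u * x)| ≤ ε

/-- RUEB sets: sup-norm bounded, right-uniformly equicontinuous. -/
def IsRUEB {G : Type*} [Group G] [TopologicalSpace G] (B : Set (G → ℝ)) : Prop :=
  (∃ C : ℝ, ∀ f ∈ B, ∀ x : G, |f x| ≤ C) ∧
  ∀ ε > (0 : ℝ), ∃ U ∈ nhds (1 : G), ∀ u ∈ U, ∀ f ∈ B, ∀ x : G, |f x - f (u * x)| ≤ ε

/-- Bounded left-uniformly continuous functions. -/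
def IsLUCB {G : Type*} [Group G] [TopologicalSpace G] (f : G → ℝ) : Prop :=
  (∃ C : ℝ, ∀ x, |f x| ≤ C) ∧
  ∀ ε > (0 : ℝ), ∃ U ∈ nhds (1 : G), ∀ u ∈ U, ∀ x : G, |f x - f (x * u)| ≤ ε

/-- LUEB sets: sup-norm bounded, left-uniformly equicontinuous. -/
def IsLUEB {G : Type*} [Group G] [TopologicalSpace G] (B : Set (G → ℝ)) : Prop :=
  (∃ C : ℝ, ∀ f ∈ B, ∀ x : G, |f x| ≤ C) ∧
  ∀ ε > (0 : ℝ), ∃ U ∈ nhds (1 : G), ∀ u ∈ U, ∀ f ∈ B, ∀ x : G, |f x - f (x * u)| ≤ ε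

/-- The UEB uniformity (uniform convergence on RUEB sets) on the space of
functionals on functions on `G`. -/
noncomputable def uebUniformityR (G : Type*) [Group G] [TopologicalSpace G] :
    UniformSpace ((G → ℝ) → ℝ) :=
  ⨅ (B : Set (G → ℝ)) (_ : IsRUEB B),
    UniformSpace.comap (fun ξ => UniformFun.ofFun fun f : B => ξ (f : G → ℝ))
      (UniformFun.uniformSpace (↥B) ℝ)

/-- The UEB topology associated with the right uniformity. -/
noncomputable def uebTopR (G : Type*) [Group G] [TopologicalSpace G] :
    TopologicalSpace ((G → ℝ) → ℝ) := (uebUniformityR G).toTopologicalSpace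

/-- `Mean_u(G_r)`: the UEB-closure of `Δ(G)` inside the functionals. -/
noncomputable def MeanUR (G : Type*) [Group G] [TopologicalSpace G] :
    Set ((G → ℝ) → ℝ) :=
  @closure _ (uebTopR G) (toFunc '' {μ : G → ℝ | IsDelta μ})

/-- The UEB uniformity (uniform convergence on LUEB sets). -/
noncomputable def uebUniformityL (G : Type*) [Group G] [TopologicalSpace G] :
    UniformSpace ((G → ℝ) → ℝ) :=
  ⨅ (B : Set (G → ℝ)) (_ : IsLUEB B),
    UniformSpace.comap (fun ξ => UniformFun.ofFun fun f : B => ξ (f : G → ℝ))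
      (UniformFun.uniformSpace (↥B) ℝ)

/-- The UEB topology associated with the left uniformity. -/
noncomputable def uebTopL (G : Type*) [Group G] [TopologicalSpace G] :
    TopologicalSpace ((G → ℝ) → ℝ) := (uebUniformityL G).toTopologicalSpace

/-- `Mean_u(G_ℓ)`: the UEB-closure of `Δ(G)`. -/
noncomputable def MeanUL (G : Type*) [Group G] [TopologicalSpace G] :
    Set ((G → ℝ) → ℝ) :=
  @closure _ (uebTopL G) (toFunc '' {μ : G → ℝ | IsDelta μ})

/-- Amenability of an action of a topological group on a topological space. -/
def AmenableAction {G : Type*} [Group G] [TopologicalSpace G]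
    {X : Type*} [TopologicalSpace X] (act : G → X → X) : Prop :=
  ∃ (ι : Type) (pι : Preorder ι) (_ : Nonempty ι)
    (_ : IsDirected ι fun a b => pι.le a b)
    (μ : ι → X → (G → ℝ) → ℝ),
    (∀ i x, μ i x ∈ MeanUR G) ∧
    (∀ i, @Continuous X ((G → ℝ) → ℝ) inferInstance (uebTopR G) (μ i)) ∧
    ∀ (g : G) (B : Set (G → ℝ)), IsRUEB B → ∀ ε > (0 : ℝ),
      ∃ i₀, ∀ i, pι.le i₀ i → ∀ x, ∀ f ∈ B,
        |actF g (μ i x) f - μ i (act g x) f| ≤ ε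

/-- Skew-amenability of an action. -/
def SkewAmenableAction {G : Type*} [Group G] [TopologicalSpace G]
    {X : Type*} [TopologicalSpace X] (act : G → X → X) : Prop :=
  ∃ (ι : Type) (pι : Preorder ι) (_ : Nonempty ι)
    (_ : IsDirected ι fun a b => pι.le a b)
    (μ : ι → X → (G → ℝ) → ℝ),
    (∀ i x, μ i x ∈ MeanUL G) ∧
    (∀ i, @Continuous X ((G → ℝ) → ℝ) inferInstance (uebTopL G) (μ i)) ∧
    ∀ (g : G) (B : Set (G → ℝ)), IsLUEB B → ∀ ε > (0 : ℝ),
      ∃ i₀, ∀ i, pι.le i₀ i → ∀ x, ∀ f ∈ B,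
        |actF g (μ i x) f - μ i (act g x) f| ≤ ε

/-- AD-amenability (Anantharaman-Delaroche) of an action of a locally compact
group, with respect to a left Haar measure `ν`. -/
def ADAmenableAction {G : Type*} [Group G] [TopologicalSpace G] [MeasurableSpace G]
    (ν : Measure G) {X : Type*} [TopologicalSpace X] (act : G → X → X) : Prop :=
  ∃ (ι : Type) (pι : Preorder ι) (_ : Nonempty ι)
    (_ : IsDirected ι fun a b => pι.le a b)
    (μ : ι → X → G → ℝ),
    (∀ i x, Integrable (μ i x) ν ∧ (∀ᵐ t ∂ν, 0 ≤ μ i x t) ∧ ∫ t, μ i x t ∂ν = 1) ∧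
    (∀ i (h : G → ℝ), Continuous h → Tendsto h (cocompact G) (nhds 0) →
      Continuous fun x => ∫ t, h t * μ i x t ∂ν) ∧
    ∀ K : Set G, IsCompact K → ∀ ε > (0 : ℝ),
      ∃ i₀, ∀ i, pι.le i₀ i → ∀ g ∈ K, ∀ x,
        ∫ t, |μ i x (g⁻¹ * t) - μ i (act g x) t| ∂ν ≤ ε

/-- Amenability of a topological group: a left-invariant mean on `RUCB(G)`. -/
def AmenableGroup (G : Type*) [Group G] [TopologicalSpace G] : Prop :=
  ∃ m : (G → ℝ) → ℝ,
    (∀ f h : G → ℝ, IsRUCB f → IsRUCB h → m (f + h) = m f + m h) ∧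
    (∀ (c : ℝ) (f : G → ℝ), IsRUCB f → m (c • f) = c * m f) ∧
    (∀ f : G → ℝ, IsRUCB f → (∀ x, 0 ≤ f x) → 0 ≤ m f) ∧
    m (fun _ => 1) = 1 ∧
    ∀ (g : G) (f : G → ℝ), IsRUCB f → m (fun x => f (g * x)) = m f

/-- Well-placed subgroups: there is an `H`-left-equivariant, right-uniformly
continuous map `G → Mean_u(H_r)` (uniform continuity spelled out via the basic
entourages of the right uniformity of `G` and the UEB pseudometrics). -/
def WellPlaced {G : Type*} [Group G] [TopologicalSpace G] (H : Subgroup G) : Prop :=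
  ∃ φ : G → ((↥H → ℝ) → ℝ),
    (∀ g, φ g ∈ MeanUR ↥H) ∧
    (∀ (h : ↥H) (g : G), φ ((h : G) * g) = actF h (φ g)) ∧
    ∀ B : Set (↥H → ℝ), IsRUEB B → ∀ ε > (0 : ℝ), ∃ U ∈ nhds (1 : G),
      ∀ x y : G, x * y⁻¹ ∈ U → ∀ f ∈ B, |φ x f - φ y f| ≤ ε


open scoped Pointwise

section AuxProofs

open Set Function

/-- A continuous compactly supported function on a topological group is uniformly continuous
for the left uniformity: `|f (g * u) - f g|` is uniformly small for `u` near `1`. -/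
private lemma key_unif {G : Type*} [Group G] [TopologicalSpace G] [IsTopologicalGroup G]
    [LocallyCompactSpace G]
    (f : G → ℝ) (hf : Continuous f) (hsupp : HasCompactSupport f)
    {ε : ℝ} (hε : 0 < ε) :
    ∃ U ∈ nhds (1 : G), ∀ g u : G, u ∈ U → |f (g * u) - f g| ≤ ε := by
  obtain ⟨V, hVc, hVn⟩ := exists_compact_mem_nhds (1 : G)
  have h1V : (1 : G) ∈ V := mem_of_mem_nhds hVn
  have hD : IsCompact (tsupport f * V⁻¹) := hsupp.mul hVc.inv
  have exW : ∀ g : G, ∃ W : Set G, IsOpen W ∧ (1 : G) ∈ W ∧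
      ∀ v ∈ W * W, |f (g * v) - f g| ≤ ε / 2 := by
    intro g
    have hcont : ContinuousAt (fun v : G => |f (g * v) - f g|) 1 :=
      (((hf.comp (continuous_mul_left g)).sub continuous_const).abs).continuousAt
    have hmem : {v : G | |f (g * v) - f g| ≤ ε / 2} ∈ nhds (1 : G) := by
      have h0 : |f (g * (1 : G)) - f g| = 0 := by simp
      have := hcont.preimage_mem_nhds (Iic_mem_nhds (by rw [h0]; exact half_pos hε))
      simpa [Set.preimage] using this
    obtain ⟨W, hWo, hW1, hWs⟩ := exists_open_nhds_one_mul_subset hmem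
    exact ⟨W, hWo, hW1, fun v hv => hWs hv⟩
  choose W hWo hW1 hWe using exW
  obtain ⟨t, -, hcover⟩ := hD.elim_nhds_subcover (fun g => g • W g)
    (fun g _ => ((hWo g).smul g).mem_nhds ⟨1, hW1 g, mul_one g⟩)
  refine ⟨V ∩ ⋂ g ∈ t, W g,
    Filter.inter_mem hVn ((Filter.biInter_finset_mem t).2 fun g _ => (hWo g).mem_nhds (hW1 g)), ?_⟩
  rintro g u ⟨huV, huW⟩
  by_cases hg : g ∈ tsupport f * V⁻¹
  · obtain ⟨g₀, hg₀t, hgmem⟩ := Set.mem_iUnion₂.1 (hcover hg)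
    obtain ⟨w, hw, rfl⟩ := hgmem
    have huW' : u ∈ W g₀ := by
      have := Set.mem_iInter₂.1 huW g₀ hg₀t
      exact this
    have hww : w ∈ W g₀ * W g₀ := by simpa using Set.mul_mem_mul hw (hW1 g₀)
    have hwu : w * u ∈ W g₀ * W g₀ := Set.mul_mem_mul hw huW'
    have h1 : |f (g₀ • w) - f g₀| ≤ ε / 2 := hWe g₀ w hww
    have h2 : |f (g₀ • w * u) - f g₀| ≤ ε / 2 := by
      have : g₀ • w * u = g₀ * (w * u) := by simp [smul_eq_mul, mul_assoc]
      rw [this]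
      exact hWe g₀ (w * u) hwu
    calc |f (g₀ • w * u) - f (g₀ • w)|
        ≤ |f (g₀ • w * u) - f g₀| + |f g₀ - f (g₀ • w)| := abs_sub_le _ _ _
      _ ≤ ε / 2 + ε / 2 := add_le_add h2 (by rw [abs_sub_comm]; exact h1)
      _ = ε := add_halves ε
  · have h1V' : (1 : G) ∈ V⁻¹ := by simpa using h1V
    have huV' : u⁻¹ ∈ V⁻¹ := Set.inv_mem_inv.mpr huV
    have hgC : g ∉ tsupport f := by
      intro h
      exact hg (by simpa using Set.mul_mem_mul h h1V')
    have hguC : g * u ∉ tsupport f := by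
      intro h
      have : (g * u) * u⁻¹ ∈ tsupport f * V⁻¹ := Set.mul_mem_mul h huV'
      exact hg (by simpa using this)
    rw [image_eq_zero_of_notMem_tsupport hgC, image_eq_zero_of_notMem_tsupport hguC]
    simpa using hε.le

/-- A discrete subgroup meets every compact set in a finite set. -/
private lemma finite_inter {G : Type*} [Group G] [TopologicalSpace G] [IsTopologicalGroup G]
    [T2Space G] (Γ : Subgroup G) [DiscreteTopology ↥Γ] {C : Set G} (hC : IsCompact C) :
    {γ : ↥Γ | (γ : G) ∈ C}.Finite := by
  have hcl : IsClosed (Γ : Set G) := Subgroup.isClosed_of_discrete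
  have hcomp : IsCompact ((Subtype.val : ↥Γ → G) ⁻¹' C) :=
    hcl.isClosedEmbedding_subtypeVal.isCompact_preimage hC
  exact hcomp.finite_of_discrete

end AuxProofs

/-- Proposition 5.11: a cocompact lattice `Γ` in a locally compact group `G` is
skew-well-placed: there is a `Γ`-left-equivariant map `G → P(Γ) ⊆ ℓ¹(Γ)` which is
uniformly continuous from the left uniformity of `G` to the `‖·‖₁`-uniformity. -/
theorem cocompact_lattice_skew_well_placed {G : Type*} [Group G] [TopologicalSpace G]
    [IsTopologicalGroup G] [LocallyCompactSpace G] [T2Space G]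
    (Γ : Subgroup G) [DiscreteTopology ↥Γ]
    (K : Set G) (hK : IsCompact K)
    (hcov : ∀ g : G, ∃ γ ∈ Γ, ∃ k ∈ K, g = γ * k) :
    ∃ φ : G → (↥Γ → ℝ),
      (∀ x : G, (∀ γ : ↥Γ, 0 ≤ φ x γ) ∧ Summable (φ x) ∧ ∑' γ : ↥Γ, φ x γ = 1) ∧
      (∀ (γ : ↥Γ) (x : G), φ ((γ : G) * x) = actD γ (φ x)) ∧
      ∀ ε > (0 : ℝ), ∃ U ∈ nhds (1 : G), ∀ x y : G, x⁻¹ * y ∈ U →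
        ∑' γ : ↥Γ, |φ x γ - φ y γ| ≤ ε := by
  classical
  obtain ⟨f, hfK, -, hfc, hf01⟩ :=
    exists_continuous_one_zero_of_isCompact hK isClosed_empty (Set.disjoint_empty K)
  have hfct : Continuous f := f.continuous
  have hf0 : ∀ x : G, 0 ≤ f x := fun x => (hf01 x).1
  have hCc : IsCompact (tsupport (⇑f)) := hfc
  set F : G → ↥Γ → ℝ := fun x γ => f ((γ : G)⁻¹ * x) with hFdef
  -- support control
  have hsub : ∀ (x : G) {D : Set G}, tsupport (⇑f) ⊆ D →
      Function.support (F x) ⊆ {γ : ↥Γ | (γ : G) ∈ (fun z => x * z) '' D⁻¹} := by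
    intro x D hD γ hγ
    have hmem : (γ : G)⁻¹ * x ∈ D := hD (subset_tsupport _ hγ)
    exact ⟨x⁻¹ * γ, by simpa [Set.mem_inv, mul_inv_rev] using hmem, by group⟩
  have hfinD : ∀ (x : G) {D : Set G}, IsCompact D →
      {γ : ↥Γ | (γ : G) ∈ (fun z => x * z) '' D⁻¹}.Finite := by
    intro x D hD
    exact finite_inter Γ (hD.inv.image (continuous_mul_left x))
  have hfinsupp : ∀ x : G, (Function.support (F x)).Finite := fun x =>
    ((hfinD x hCc).subset (hsub x subset_rfl))
  have hFsum : ∀ x : G, Summable (F x) := fun x => summable_of_finite_support (hfinsupp x)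
  set S : G → ℝ := fun x => ∑' γ : ↥Γ, F x γ with hSdef
  have hS1 : ∀ x : G, 1 ≤ S x := by
    intro x
    obtain ⟨γ, hγ, k, hk, rfl⟩ := hcov x
    have hval : F (γ * k) ⟨γ, hγ⟩ = 1 := by
      have : (γ : G)⁻¹ * (γ * k) = k := by group
      simp only [hFdef, this]
      exact hfK hk
    calc (1 : ℝ) = F (γ * k) ⟨γ, hγ⟩ := hval.symm
      _ ≤ S (γ * k) := Summable.le_tsum (hFsum _) _ (fun j _ => hf0 _)
  have hSpos : ∀ x : G, 0 < S x := fun x => zero_lt_one.trans_le (hS1 x)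
  have hSne : ∀ x : G, S x ≠ 0 := fun x => (hSpos x).ne'
  have hFequiv : ∀ (γ₀ : ↥Γ) (x : G) (γ : ↥Γ), F ((γ₀ : G) * x) γ = F x ((γ₀ : ↥Γ)⁻¹ * γ) := by
    intro γ₀ x γ
    simp only [hFdef, Subgroup.coe_mul, Subgroup.coe_inv, mul_inv_rev, inv_inv]
    congr 1
    group
  have hSequiv : ∀ (γ₀ : ↥Γ) (x : G), S ((γ₀ : G) * x) = S x := by
    intro γ₀ x
    calc S ((γ₀ : G) * x) = ∑' γ : ↥Γ, F ((γ₀ : G) * x) γ := rfl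
      _ = ∑' γ : ↥Γ, F ((γ₀ : G) * x) ((Equiv.mulLeft γ₀) γ) :=
          ((Equiv.mulLeft γ₀).tsum_eq _).symm
      _ = ∑' γ : ↥Γ, F x γ := tsum_congr (fun γ => by
          rw [hFequiv γ₀ x ((Equiv.mulLeft γ₀) γ)]
          congr 1
          simp [Equiv.mulLeft, inv_mul_cancel_left])
      _ = S x := rfl
  refine ⟨fun x γ => F x γ / S x, ?_, ?_, ?_⟩
  · intro x
    refine ⟨fun γ => div_nonneg (hf0 _) (hSpos x).le, (hFsum x).div_const _, ?_⟩
    rw [tsum_div_const]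
    exact div_self (hSne x)
  · intro γ₀ x
    funext γ
    show F ((γ₀ : G) * x) γ / S ((γ₀ : G) * x) = actD γ₀ (fun γ => F x γ / S x) γ
    rw [hSequiv, hFequiv]
    rfl
  · intro ε hε
    obtain ⟨V, hVc, hVn⟩ := exists_compact_mem_nhds (1 : G)
    have h1V : (1 : G) ∈ V := mem_of_mem_nhds hVn
    set C' : Set G := tsupport (⇑f) * V⁻¹ with hC'def
    have hC' : IsCompact C' := hCc.mul hVc.inv
    have h1V' : (1 : G) ∈ V⁻¹ := by simpa using h1V
    have hCC' : tsupport (⇑f) ⊆ C' := fun c hc => by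
      simpa [hC'def] using Set.mul_mem_mul hc h1V'
    have hT : {γ : ↥Γ | (γ : G) ∈ C' * C'⁻¹}.Finite := finite_inter Γ (hC'.mul hC'.inv)
    set N : ℕ := hT.toFinset.card + 1 with hNdef
    have hNpos : (0 : ℝ) < (N : ℝ) := by
      rw [hNdef]
      exact_mod_cast Nat.succ_pos hT.toFinset.card
    set δ : ℝ := ε / (2 * N) with hδdef
    have hδpos : 0 < δ := by
      rw [hδdef]
      exact div_pos hε (by linarith)
    obtain ⟨U₀, hU₀n, hU₀⟩ := key_unif (⇑f) hfct hfc hδpos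
    refine ⟨U₀ ∩ V, Filter.inter_mem hU₀n hVn, ?_⟩
    intro x y hu
    obtain ⟨huU₀, huV⟩ := hu
    have hy : y = x * (x⁻¹ * y) := by group
    set u : G := x⁻¹ * y with hudef
    -- the finite set A containing all relevant γ
    set A : Set ↥Γ := {γ : ↥Γ | (γ : G)⁻¹ * x ∈ C'} with hAdef
    have hAfin : A.Finite := by
      apply (hfinD x hC').subset
      intro γ hγ
      exact ⟨x⁻¹ * γ, by simpa [Set.mem_inv, mul_inv_rev] using (show (γ : G)⁻¹ * x ∈ C' from hγ), by group⟩
    -- supports inside A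
    have hsx : ∀ γ : ↥Γ, γ ∉ hAfin.toFinset → F x γ = 0 := by
      intro γ hγ
      by_contra h
      exact hγ (hAfin.mem_toFinset.2 (hCC' (subset_tsupport _ h)))
    have hsy : ∀ γ : ↥Γ, γ ∉ hAfin.toFinset → F y γ = 0 := by
      intro γ hγ
      by_contra h
      apply hγ
      apply hAfin.mem_toFinset.2
      have hmem : (γ : G)⁻¹ * y ∈ tsupport (⇑f) := subset_tsupport _ h
      have huV' : u⁻¹ ∈ V⁻¹ := Set.inv_mem_inv.mpr huV
      have : ((γ : G)⁻¹ * y) * u⁻¹ ∈ C' :=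
        Set.mul_mem_mul hmem huV'
      have heq : ((γ : G)⁻¹ * y) * u⁻¹ = (γ : G)⁻¹ * x := by
        rw [hudef]; group
      rwa [heq] at this
    -- cardinality bound
    have hcard : (hAfin.toFinset.card : ℝ) ≤ (N : ℝ) := by
      rcases Finset.eq_empty_or_nonempty hAfin.toFinset with he | ⟨γ₀, hγ₀⟩
      · rw [he]; simpa using hNpos.le
      · have hγ₀A : (γ₀ : G)⁻¹ * x ∈ C' := hAfin.mem_toFinset.1 hγ₀
        have hinj : ∀ γ ∈ hAfin.toFinset, γ₀⁻¹ * γ ∈ hT.toFinset := by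
          intro γ hγ
          have hγA : (γ : G)⁻¹ * x ∈ C' := hAfin.mem_toFinset.1 hγ
          apply hT.mem_toFinset.2
          have : ((γ₀ : G)⁻¹ * x) * ((γ : G)⁻¹ * x)⁻¹ ∈ C' * C'⁻¹ :=
            Set.mul_mem_mul hγ₀A (Set.inv_mem_inv.mpr hγA)
          have heq : ((γ₀ : G)⁻¹ * x) * ((γ : G)⁻¹ * x)⁻¹ = ((γ₀⁻¹ * γ : ↥Γ) : G) := by
            simp only [Subgroup.coe_mul, Subgroup.coe_inv, mul_inv_rev, inv_inv]
            group
          rwa [heq] at this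
        have hle : hAfin.toFinset.card ≤ hT.toFinset.card :=
          Finset.card_le_card_of_injOn (fun γ => γ₀⁻¹ * γ) hinj
            (fun a _ b _ hab => by
              have := congrArg (fun z => γ₀ * z) hab
              simpa using this)
        have : hAfin.toFinset.card ≤ N := hle.trans (Nat.le_succ _)
        exact_mod_cast this
    -- pointwise estimate on F
    have hpt : ∀ γ : ↥Γ, |F x γ - F y γ| ≤ δ := by
      intro γ
      have hFy : F y γ = f (((γ : G)⁻¹ * x) * u) := by
        rw [hFdef]
        simp only
        congr 1
        rw [hudef]; group
      rw [hFy, abs_sub_comm]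
      exact hU₀ ((γ : G)⁻¹ * x) u huU₀
    -- the ℓ¹ distance between F x and F y
    have hdiffsupp : Function.support (fun γ : ↥Γ => |F x γ - F y γ|) ⊆ hAfin.toFinset := by
      intro γ hγ
      by_contra h
      apply hγ
      simp only [Function.mem_support, ne_eq, not_not]
      rw [hsx γ h, hsy γ h]
      simp
    have hDsum : Summable (fun γ : ↥Γ => |F x γ - F y γ|) :=
      summable_of_finite_support (hAfin.subset (by
        intro γ hγ
        have := hdiffsupp hγ
        exact hAfin.mem_toFinset.1 this))
    set D : ℝ := ∑' γ : ↥Γ, |F x γ - F y γ| with hDdef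
    have hD0 : 0 ≤ D := tsum_nonneg (fun γ => abs_nonneg _)
    have hDle : D ≤ (N : ℝ) * δ := by
      rw [hDdef, tsum_eq_sum (s := hAfin.toFinset)
        (fun γ hγ => by rw [hsx γ hγ, hsy γ hγ]; simp)]
      calc ∑ γ ∈ hAfin.toFinset, |F x γ - F y γ|
          ≤ hAfin.toFinset.card • δ :=
            Finset.sum_le_card_nsmul _ _ _ (fun γ _ => hpt γ)
        _ = (hAfin.toFinset.card : ℝ) * δ := nsmul_eq_mul _ _
        _ ≤ (N : ℝ) * δ := mul_le_mul_of_nonneg_right hcard hδpos.le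
    have hSdiff : |S x - S y| ≤ D := by
      have heq : S x - S y = ∑' γ : ↥Γ, (F x γ - F y γ) := (Summable.tsum_sub (hFsum x) (hFsum y)).symm
      rw [heq]
      calc |∑' γ : ↥Γ, (F x γ - F y γ)| = ‖∑' γ : ↥Γ, (F x γ - F y γ)‖ := (Real.norm_eq_abs _).symm
        _ ≤ ∑' γ : ↥Γ, ‖F x γ - F y γ‖ := norm_tsum_le_tsum_norm (by
              simpa [Real.norm_eq_abs] using hDsum)
        _ = D := by simp [hDdef, Real.norm_eq_abs]
    -- pointwise estimate on φ
    have hkey : ∀ γ : ↥Γ, |F x γ / S x - F y γ / S y| ≤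
        |F x γ - F y γ| / S x + F y γ * (|S y - S x| / (S x * S y)) := by
      intro γ
      have hx0 : S x ≠ 0 := hSne x
      have hy0 : S y ≠ 0 := hSne y
      have e : F x γ / S x - F y γ / S y =
          (F x γ - F y γ) / S x + F y γ * ((S y - S x) / (S x * S y)) := by
        field_simp
        ring
      rw [e]
      refine (abs_add_le _ _).trans (add_le_add ?_ ?_)
      · rw [abs_div, abs_of_pos (hSpos x)]
      · rw [abs_mul, abs_of_nonneg (hf0 _), abs_div, abs_of_pos (mul_pos (hSpos x) (hSpos y))]
    have hlhs_sum : Summable (fun γ : ↥Γ => |F x γ / S x - F y γ / S y|) := by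
      apply summable_of_finite_support
      apply hAfin.subset
      intro γ hγ
      by_contra h
      apply hγ
      have h' : γ ∉ hAfin.toFinset := fun hc => h (hAfin.mem_toFinset.1 hc)
      simp only [Function.mem_support, ne_eq, not_not]
      rw [hsx γ h', hsy γ h']
      simp
    have hrhs_sum : Summable (fun γ : ↥Γ =>
        |F x γ - F y γ| / S x + F y γ * (|S y - S x| / (S x * S y))) :=
      (hDsum.div_const _).add ((hFsum y).mul_right _)
    have step1 : (∑' γ : ↥Γ, |F x γ / S x - F y γ / S y|) ≤
        ∑' γ : ↥Γ, (|F x γ - F y γ| / S x + F y γ * (|S y - S x| / (S x * S y))) :=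
      Summable.tsum_le_tsum hkey hlhs_sum hrhs_sum
    have step2 : (∑' γ : ↥Γ, (|F x γ - F y γ| / S x + F y γ * (|S y - S x| / (S x * S y))))
        = D / S x + S y * (|S y - S x| / (S x * S y)) := by
      rw [Summable.tsum_add (hDsum.div_const _) ((hFsum y).mul_right _), tsum_div_const,
        (hFsum y).tsum_mul_right]
    have step3 : D / S x + S y * (|S y - S x| / (S x * S y)) ≤ D + D := by
      have hx0 : S x ≠ 0 := hSne x
      have hy0 : S y ≠ 0 := hSne y
      have h1 : D / S x ≤ D := div_le_self hD0 (hS1 x)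
      have heq : S y * (|S y - S x| / (S x * S y)) = |S y - S x| / S x := by
        field_simp
      have h2 : S y * (|S y - S x| / (S x * S y)) ≤ D := by
        rw [heq]
        calc |S y - S x| / S x ≤ |S y - S x| := div_le_self (abs_nonneg _) (hS1 x)
          _ = |S x - S y| := abs_sub_comm _ _
          _ ≤ D := hSdiff
      exact add_le_add h1 h2
    have step4 : D + D ≤ (N : ℝ) * δ + (N : ℝ) * δ := add_le_add hDle hDle
    have hN0 : (N : ℝ) ≠ 0 := hNpos.ne'
    have hhalf : (N : ℝ) * (ε / (2 * (N : ℝ))) = ε / 2 := by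
      rw [← div_div, mul_comm, div_mul_cancel₀ _ hN0]
    have step5 : (N : ℝ) * δ + (N : ℝ) * δ = ε := by
      rw [hδdef, hhalf]
      exact add_halves ε
    rw [step2] at step1
    linarith
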